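/- Suppose f : [0,1]^d → ℝ satisfies f(x) = g(x_j, h(x_{∖j})) for all x ∈ [0,1]^d, where h : [0,1]^{d-1} → ℝ is differentiable and g : [0,1] × ℝ → ℝ is differentiable in its second argument. Fix any interior point x_{∖j} and any finite collection of values x_j^1, ..., x_j^m ∈ [0,1]. Then the matrix A ∈ ℝ^{m × (d-1)} whose m-th row is the gradient vector ∇_{x_{∖j}} f(x_j^m, x_{∖j}) has rank at most 1; equivalently, there exists a unit vector z ∈ ℝ^{d-1} such that every row a of A satisfies a = (z z^T) a, so the gradient projection error E = Σ_m ‖a^m − (z z^T) a^m‖² equals zero. -/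

import Mathlib

/-- Recombine the singled-out coordinate value `t` (in position `j`) with the vector `w` of the
remaining coordinates to form a full input vector in `ℝ^d`. -/
def insertCoord {d : ℕ} (j : Fin d) (t : ℝ) (w : {k : Fin d // k ≠ j} → ℝ) : Fin d → ℝ :=
  fun k => if hk : k = j then t else w ⟨k, hk⟩

/-- Suppose `f(x) = g(x_j, h(x_{∖j}))` on `[0,1]^d` with `h` differentiable and
`g` differentiable in its second argument. Fix an interior point `w = x_{∖j}` (all coordinates in
`(0,1)`) and values `x_j^1, …, x_j^m ∈ [0,1]`. Let `A` be the `m × (d-1)` matrix whose `i`-th row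
is the gradient `∇_{x_{∖j}} f(x_j^i, w)`. Then `A` has rank at most `1`; equivalently there is a
unit vector `z` with every row `a` of `A` satisfying `a = (z zᵀ) a`, so the gradient projection
error `E = Σ_i ‖aⁱ − (z zᵀ) aⁱ‖²` equals zero. -/
theorem iann_gradient_projection_error_zero (d : ℕ) (hd : 2 ≤ d) (j : Fin d)
    (f : (Fin d → ℝ) → ℝ) (g : ℝ → ℝ → ℝ) (h : ({k : Fin d // k ≠ j} → ℝ) → ℝ)
    (hh : DifferentiableOn ℝ h (Set.Icc (0 : {k : Fin d // k ≠ j} → ℝ) 1))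
    (hg : ∀ u, Differentiable ℝ (g u))
    (hf : ∀ x ∈ Set.Icc (0 : Fin d → ℝ) 1, f x = g (x j) (h fun k => x k.1))
    (w : {k : Fin d // k ≠ j} → ℝ) (hw : ∀ k, w k ∈ Set.Ioo (0 : ℝ) 1)
    (m : ℕ) (t : Fin m → ℝ) (ht : ∀ i, t i ∈ Set.Icc (0 : ℝ) 1)
    (A : Matrix (Fin m) {k : Fin d // k ≠ j} ℝ)
    (hA : ∀ i k, A i k =
      fderiv ℝ (fun w' => f (insertCoord j (t i) w')) w (Pi.single k 1)) :
    A.rank ≤ 1 ∧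
      ∃ z : {k : Fin d // k ≠ j} → ℝ,
        (∑ k, z k ^ 2 = 1) ∧
        (∀ i k, A i k = z k * ∑ k', z k' * A i k') ∧
        (∑ i, ∑ k, (A i k - z k * ∑ k', z k' * A i k') ^ 2 = 0) := by
  classical
  -- Icc is a neighborhood of w
  have hIcc : Set.Icc (0 : {k : Fin d // k ≠ j} → ℝ) 1 ∈ nhds w := by
    rw [← Set.pi_univ_Icc]
    exact set_pi_mem_nhds Set.finite_univ
      (fun k _ => Icc_mem_nhds (hw k).1 (hw k).2)
  have hhw : DifferentiableAt ℝ h w := hh.differentiableAt hIcc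
  set c : Fin m → ℝ := fun i => deriv (g (t i)) (h w) with hc
  set v : {k : Fin d // k ≠ j} → ℝ := fun k => fderiv ℝ h w (Pi.single k 1) with hv
  -- key identity
  have key : ∀ i k, A i k = c i * v k := by
    intro i k
    have hE : (fun w' => f (insertCoord j (t i) w')) =ᶠ[nhds w]
        (fun w' => g (t i) (h w')) := by
      filter_upwards [hIcc] with w' hw'
      have hmem : insertCoord j (t i) w' ∈ Set.Icc (0 : Fin d → ℝ) 1 := by
        constructor
        · rw [Pi.le_def]
          intro k'
          simp only [Pi.zero_apply, insertCoord]
          by_cases hk' : k' = j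
          · simpa [hk'] using (ht i).1
          · simpa [hk'] using Pi.le_def.mp hw'.1 ⟨k', hk'⟩
        · rw [Pi.le_def]
          intro k'
          simp only [Pi.one_apply, insertCoord]
          by_cases hk' : k' = j
          · simpa [hk'] using (ht i).2
          · simpa [hk'] using Pi.le_def.mp hw'.2 ⟨k', hk'⟩
      rw [hf _ hmem]
      congr 1
      · simp [insertCoord]
      · congr 1
        funext k'
        simp [insertCoord, k'.2]
    have hD : HasFDerivAt (fun w' => g (t i) (h w'))
        (deriv (g (t i)) (h w) • fderiv ℝ h w) w :=
      HasDerivAt.comp_hasFDerivAt w ((hg (t i) (h w)).hasDerivAt) hhw.hasFDerivAt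
    rw [hA i k, Filter.EventuallyEq.fderiv_eq hE, hD.fderiv]
    simp [smul_eq_mul, mul_comm]
    rfl
  refine ⟨?_, ?_⟩
  · -- rank ≤ 1
    have hrange : LinearMap.range A.mulVecLin ≤ Submodule.span ℝ {c} := by
      rintro y ⟨x, rfl⟩
      rw [Submodule.mem_span_singleton]
      refine ⟨∑ k, v k * x k, ?_⟩
      funext i
      simp only [Matrix.mulVecLin_apply, Matrix.mulVec, dotProduct, Pi.smul_apply,
        smul_eq_mul]
      rw [Finset.sum_mul]
      exact Finset.sum_congr rfl fun k _ => by rw [key]; ring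
    calc A.rank ≤ Module.finrank ℝ (Submodule.span ℝ ({c} : Set (Fin m → ℝ))) :=
          Submodule.finrank_mono hrange
      _ ≤ 1 := by
          by_cases hc0 : c = 0
          · rw [hc0, Submodule.span_zero_singleton]
            simp
          · rw [finrank_span_singleton hc0]
  · -- unit vector
    by_cases hv0 : v = 0
    · -- all rows are zero; pick any unit vector
      have hA0 : ∀ i k, A i k = 0 := fun i k => by simp [key i k, hv0]
      haveI : Nontrivial (Fin d) := Fin.nontrivial_iff_two_le.mpr hd
      obtain ⟨k₀, hk₀⟩ : ∃ k : Fin d, k ≠ j := exists_ne j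
      refine ⟨Pi.single ⟨k₀, hk₀⟩ 1, ?_, ?_, ?_⟩
      · rw [Finset.sum_eq_single ⟨k₀, hk₀⟩] <;> simp +contextual [Pi.single_apply]
      · intro i k; simp [hA0]
      · simp [hA0]
    · -- normalize v
      set S : ℝ := ∑ k, v k ^ 2 with hS
      have hSpos : 0 < S := by
        obtain ⟨k, hk⟩ : ∃ k, v k ≠ 0 := by
          by_contra hcon
          push_neg at hcon
          exact hv0 (funext hcon)
        exact Finset.sum_pos' (fun k _ => sq_nonneg _)
          ⟨k, Finset.mem_univ k, by positivity⟩
      have hsq : Real.sqrt S ^ 2 = S := Real.sq_sqrt hSpos.le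
      have hsne : Real.sqrt S ≠ 0 := by positivity
      refine ⟨fun k => v k / Real.sqrt S, ?_, ?_, ?_⟩
      · have : ∑ k, (v k / Real.sqrt S) ^ 2 = (∑ k, v k ^ 2) / S := by
          rw [Finset.sum_div]
          exact Finset.sum_congr rfl fun k _ => by
            rw [div_pow, hsq]
        rw [this, ← hS, div_self hSpos.ne']
      · intro i k
        have hsum : ∑ k', v k' / Real.sqrt S * A i k' = c i * Real.sqrt S := by
          have h1 : ∑ k', v k' / Real.sqrt S * A i k' =
              (∑ k', v k' ^ 2) * c i / Real.sqrt S := by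
            rw [Finset.sum_mul, Finset.sum_div]
            exact Finset.sum_congr rfl fun k' _ => by rw [key]; ring
          rw [h1, ← hS, mul_comm S (c i), mul_div_assoc, Real.div_sqrt]
        rw [hsum, key]
        field_simp
      · apply Finset.sum_eq_zero
        intro i _
        apply Finset.sum_eq_zero
        intro k _
        have hsum : ∑ k', v k' / Real.sqrt S * A i k' = c i * Real.sqrt S := by
          have h1 : ∑ k', v k' / Real.sqrt S * A i k' =
              (∑ k', v k' ^ 2) * c i / Real.sqrt S := by
            rw [Finset.sum_mul, Finset.sum_div]
            exact Finset.sum_congr rfl fun k' _ => by rw [key]; ring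
          rw [h1, ← hS, mul_comm S (c i), mul_div_assoc, Real.div_sqrt]
        rw [hsum, key]
        have h2 : v k / Real.sqrt S * (c i * Real.sqrt S) = c i * v k := by
          field_simp
        rw [h2, sub_self]
        simp
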